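/- Let F̃ and F be nonnegative functions on a ball B(r,y) with |F(x) − F̃(x)| ≤ c‖x−y‖₂³ for all x ∈ B(r,y), where F(x) ≥ α > 0 and F(x) ≥ λ‖x−y‖₂² on B(r,y) for constants α, λ > 0. Let f, f̃ ≥ 0 satisfy f(x) ≤ f̃(x) + c_i‖x−y‖₂³ and F ≥ F̃ on B(r,y). Then sup_{x ∈ B(r,y)} f(x)/F(x) ≤ sup_{x ∈ B(r,y)} f̃(x)/F̃(x) + min(c_i r/λ, c_i r³/α). -/

import Mathlib

/-- Local sensitivity bound via quadratic approximation: if on the ball `B(r,y)` the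
function `F` is within `c‖x−y‖³` of its approximation `F̃`, `F ≥ α > 0`,
`F ≥ λ‖x−y‖²`, `F ≥ F̃ > 0`, and a summand satisfies `f ≤ f̃ + cᵢ‖x−y‖³` with
`f, f̃ ≥ 0`, then any upper bound `t` on `f̃/F̃` over the ball yields
`f/F ≤ t + min(cᵢ r/λ, cᵢ r³/α)` over the ball. -/
theorem stmt_16 {d : ℕ} (y : EuclideanSpace ℝ (Fin d)) (r : ℝ) (hr : 0 < r)
    (F Ft f ft : EuclideanSpace ℝ (Fin d) → ℝ) (c ci α lam t : ℝ)
    (hα : 0 < α) (hlam : 0 < lam) (hci : 0 ≤ ci)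
    (happrox : ∀ x ∈ Metric.closedBall y r, |F x - Ft x| ≤ c * ‖x - y‖ ^ 3)
    (hFα : ∀ x ∈ Metric.closedBall y r, α ≤ F x)
    (hFlam : ∀ x ∈ Metric.closedBall y r, lam * ‖x - y‖ ^ 2 ≤ F x)
    (hFtpos : ∀ x ∈ Metric.closedBall y r, 0 < Ft x)
    (hFFt : ∀ x ∈ Metric.closedBall y r, Ft x ≤ F x)
    (hfnn : ∀ x ∈ Metric.closedBall y r, 0 ≤ f x)
    (hftnn : ∀ x ∈ Metric.closedBall y r, 0 ≤ ft x)
    (hf : ∀ x ∈ Metric.closedBall y r, f x ≤ ft x + ci * ‖x - y‖ ^ 3)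
    (ht : ∀ x ∈ Metric.closedBall y r, ft x / Ft x ≤ t) :
    ∀ x ∈ Metric.closedBall y r,
      f x / F x ≤ t + min (ci * r / lam) (ci * r ^ 3 / α) := by
  intro x hx
  have hnr : ‖x - y‖ ≤ r := by
    rw [Metric.mem_closedBall, dist_eq_norm] at hx; exact hx
  have hn0 : (0:ℝ) ≤ ‖x - y‖ := norm_nonneg _
  have hF : 0 < F x := lt_of_lt_of_le hα (hFα x hx)
  have hFt : 0 < Ft x := hFtpos x hx
  have h1 : f x / F x ≤ ft x / Ft x + ci * ‖x - y‖ ^ 3 / F x := by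
    have : f x / F x ≤ (ft x + ci * ‖x - y‖ ^ 3) / F x :=
      div_le_div_of_nonneg_right (hf x hx) hF.le
    rw [add_div] at this
    refine this.trans (add_le_add_left ?_ _)
    exact div_le_div_of_nonneg_left (hftnn x hx) hFt (hFFt x hx)
  have herr : ci * ‖x - y‖ ^ 3 / F x ≤ min (ci * r / lam) (ci * r ^ 3 / α) := by
    refine le_min ?_ ?_
    · rcases eq_or_lt_of_le hn0 with h0 | h0
      · rw [← h0]
        simp only [ne_eq, OfNat.ofNat_ne_zero, not_false_eq_true, zero_pow, mul_zero, zero_div]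
        positivity
      · have hlam2 : 0 < lam * ‖x - y‖ ^ 2 := by positivity
        have h2 : ci * ‖x - y‖ ^ 3 / F x ≤ ci * ‖x - y‖ ^ 3 / (lam * ‖x - y‖ ^ 2) :=
          div_le_div_of_nonneg_left (by positivity) hlam2 (hFlam x hx)
        have h3 : ci * ‖x - y‖ ^ 3 / (lam * ‖x - y‖ ^ 2) = ci * ‖x - y‖ / lam := by
          field_simp
        rw [h3] at h2
        refine h2.trans ?_
        apply div_le_div_of_nonneg_right _ hlam.le
        exact mul_le_mul_of_nonneg_left hnr hci
    · apply div_le_div₀ (by positivity) _ hα (hFα x hx)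
      have : ‖x - y‖ ^ 3 ≤ r ^ 3 := pow_le_pow_left₀ hn0 hnr 3
      exact mul_le_mul_of_nonneg_left this hci
  calc f x / F x ≤ ft x / Ft x + ci * ‖x - y‖ ^ 3 / F x := h1
    _ ≤ t + min (ci * r / lam) (ci * r ^ 3 / α) := add_le_add (ht x hx) herr
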